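/- There exists a constant C > 0 such that for all R > 0 and all x₀, y₀ ∈ ℝ² one has ∫_{ℝ²} θ_{R,x₀}(x) θ_{R,y₀}(x) dx ≤ C · R⁻¹ · θ_{R,x₀}(y₀). -/

import Mathlib

open MeasureTheory

noncomputable def thetaR (R : ℝ) (x₀ x : EuclideanSpace ℝ (Fin 2)) : ℝ :=
  1 / (R ^ 3 + ‖x - x₀‖ ^ 3)

local notation "E2" => EuclideanSpace ℝ (Fin 2)

lemma theta_cont (R : ℝ) (hR : 0 < R) (a : E2) : Continuous (thetaR R a) := by
  unfold thetaR
  refine continuous_const.div (by fun_prop) (fun x => ?_)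
  have : (0:ℝ) ≤ ‖x - a‖ := norm_nonneg _
  positivity

lemma theta_nonneg (R : ℝ) (hR : 0 < R) (a x : E2) : 0 ≤ thetaR R a x := by
  unfold thetaR
  have : (0:ℝ) ≤ ‖x - a‖ := norm_nonneg _
  positivity

lemma I_lt_top : ∫⁻ y : E2, ENNReal.ofReal (1 / (1 + ‖y‖ ^ 3)) < ⊤ := by
  have hint : Integrable (fun y : E2 => 8 * (1 + ‖y‖) ^ (-(3:ℝ))) := by
    refine (integrable_one_add_norm ?_).const_mul 8
    simp [finrank_euclideanSpace]
    norm_num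
  refine lt_of_le_of_lt ?_ hint.lintegral_lt_top
  refine lintegral_mono fun y => ENNReal.ofReal_le_ofReal ?_
  set t := ‖y‖ with ht
  have ht0 : 0 ≤ t := norm_nonneg _
  have h1 : (0:ℝ) < 1 + t := by linarith
  have h2 : (1 + t) ^ (-(3:ℝ)) = 1 / (1 + t)^3 := by
    rw [Real.rpow_neg h1.le, one_div]
    norm_cast
  rw [h2]
  rw [mul_one_div, div_le_div_iff₀ (by positivity) (by positivity)]
  ring_nf
  nlinarith [sq_nonneg (t - 1), sq_nonneg (t*t - 1), sq_nonneg (t*t - t), mul_nonneg ht0 ht0, mul_nonneg (mul_nonneg ht0 ht0) ht0]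

lemma key_integral {R : ℝ} (hR : 0 < R) (a : E2) :
    ∫⁻ x : E2, ENNReal.ofReal (thetaR R a x) =
      ENNReal.ofReal R⁻¹ * ∫⁻ y : E2, ENNReal.ofReal (1 / (1 + ‖y‖ ^ 3)) := by
  have hRne : R ≠ 0 := hR.ne'
  have hRine : R⁻¹ ≠ 0 := inv_ne_zero hRne
  have hpt : ∀ x : E2, thetaR R a x = R⁻¹^3 * (1 / (1 + ‖R⁻¹ • (x - a)‖ ^ 3)) := by
    intro x
    have hn : ‖R⁻¹ • (x - a)‖ = R⁻¹ * ‖x - a‖ := by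
      rw [norm_smul, Real.norm_eq_abs, abs_of_pos (by positivity)]
    rw [hn]
    unfold thetaR
    have h0 : (0:ℝ) ≤ ‖x - a‖ := norm_nonneg _
    field_simp
  simp_rw [hpt]
  have hof : ∀ x : E2, ENNReal.ofReal (R⁻¹^3 * (1 / (1 + ‖R⁻¹ • (x - a)‖ ^ 3))) =
      ENNReal.ofReal (R⁻¹^3) * ENNReal.ofReal (1 / (1 + ‖R⁻¹ • (x - a)‖ ^ 3)) := by
    intro x; rw [ENNReal.ofReal_mul (by positivity)]
  simp_rw [hof]
  rw [lintegral_const_mul' _ _ ENNReal.ofReal_ne_top]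
  -- translation invariance
  have htrans : ∫⁻ x : E2, ENNReal.ofReal (1 / (1 + ‖R⁻¹ • (x - a)‖ ^ 3)) =
      ∫⁻ x : E2, ENNReal.ofReal (1 / (1 + ‖R⁻¹ • x‖ ^ 3)) := by
    exact lintegral_sub_right_eq_self (fun x => ENNReal.ofReal (1 / (1 + ‖R⁻¹ • x‖ ^ 3))) a
  rw [htrans]
  -- scaling
  have e : E2 ≃ᵐ E2 := (Homeomorph.smul (Units.mk0 R⁻¹ hRine)).toMeasurableEquiv
  have hscale : ∫⁻ x : E2, ENNReal.ofReal (1 / (1 + ‖R⁻¹ • x‖ ^ 3)) =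
      ENNReal.ofReal (R ^ 2) * ∫⁻ y : E2, ENNReal.ofReal (1 / (1 + ‖y‖ ^ 3)) := by
    have := lintegral_map_equiv (μ := (volume : Measure E2))
      (fun y : E2 => ENNReal.ofReal (1 / (1 + ‖y‖ ^ 3)))
      ((Homeomorph.smul (Units.mk0 R⁻¹ hRine)).toMeasurableEquiv)
    have hmap : Measure.map (fun x : E2 => R⁻¹ • x) volume
        = ENNReal.ofReal |((R⁻¹) ^ Module.finrank ℝ (EuclideanSpace ℝ (Fin 2)))⁻¹| • volume :=
      Measure.map_addHaar_smul volume hRine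
    calc ∫⁻ x : E2, ENNReal.ofReal (1 / (1 + ‖R⁻¹ • x‖ ^ 3))
        = ∫⁻ y, ENNReal.ofReal (1 / (1 + ‖y‖ ^ 3))
            ∂(Measure.map (fun x : E2 => R⁻¹ • x) volume) := by
          exact this.symm
      _ = ENNReal.ofReal |((R⁻¹) ^ Module.finrank ℝ (EuclideanSpace ℝ (Fin 2)))⁻¹|
            * ∫⁻ y : E2, ENNReal.ofReal (1 / (1 + ‖y‖ ^ 3)) := by
          rw [hmap, lintegral_smul_measure, smul_eq_mul]
      _ = ENNReal.ofReal (R ^ 2) * ∫⁻ y : E2, ENNReal.ofReal (1 / (1 + ‖y‖ ^ 3)) := by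
          congr 2
          rw [finrank_euclideanSpace]
          simp only [Fintype.card_fin, inv_pow, inv_inv]
          rw [abs_of_pos (by positivity)]
  rw [hscale, ← mul_assoc, ← ENNReal.ofReal_mul (by positivity)]
  congr 1
  field_simp

lemma pointwise_bound {R : ℝ} (hR : 0 < R) (x₀ y₀ x : E2) :
    thetaR R x₀ x * thetaR R y₀ x ≤
      8 * thetaR R x₀ y₀ * (thetaR R x₀ x + thetaR R y₀ x) := by
  set a := ‖x - x₀‖ with ha
  set b := ‖x - y₀‖ with hb
  set d := ‖y₀ - x₀‖ with hd
  have ha0 : 0 ≤ a := norm_nonneg _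
  have hb0 : 0 ≤ b := norm_nonneg _
  have hd0 : 0 ≤ d := norm_nonneg _
  have htri : d ≤ a + b := by
    have : y₀ - x₀ = (x - x₀) - (x - y₀) := by abel
    rw [hd, this]
    exact norm_sub_le _ _
  have : thetaR R x₀ y₀ = 1 / (R^3 + d^3) := rfl
  unfold thetaR
  rw [← ha, ← hb, ← hd]
  set p := R^3 + a^3 with hp
  set q := R^3 + b^3 with hq
  set r := R^3 + d^3 with hr
  have hp0 : 0 < p := by positivity
  have hq0 : 0 < q := by positivity
  have hr0 : 0 < r := by positivity
  have hcube : d^3 ≤ 4*(a^3 + b^3) := by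
    have h1 : d^3 ≤ (a+b)^3 := pow_le_pow_left₀ hd0 htri 3
    nlinarith [sq_nonneg (a-b), mul_nonneg ha0 hb0, mul_nonneg (mul_nonneg ha0 hb0) (add_nonneg ha0 hb0)]
  have hkey : r ≤ 8 * (p + q) := by
    rw [hr, hp, hq]
    nlinarith [pow_pos hR 3]
  have heq : 8 * (1/r) * (1/p + 1/q) = 8*(p+q) / (r*p*q) := by
    field_simp
    ring
  rw [div_mul_div_comm, one_mul, heq]
  rw [div_le_div_iff₀ (by positivity) (by positivity)]
  nlinarith [mul_pos hp0 hq0, mul_pos (mul_pos hp0 hq0) hr0, mul_le_mul_of_nonneg_right hkey (le_of_lt (mul_pos hp0 hq0))]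

theorem scaled_theta_convolution_estimate :
    ∃ C : ℝ, 0 < C ∧ ∀ R : ℝ, 0 < R → ∀ x₀ y₀ : EuclideanSpace ℝ (Fin 2),
      ∫⁻ x, ENNReal.ofReal (thetaR R x₀ x * thetaR R y₀ x) ≤
        ENNReal.ofReal (C * R⁻¹ * thetaR R x₀ y₀) := by
  set I := ∫⁻ y : E2, ENNReal.ofReal (1 / (1 + ‖y‖ ^ 3)) with hI
  set C₀ := I.toReal + 1 with hC₀
  have hC₀pos : 0 < C₀ := by positivity
  have hIne : I ≠ ⊤ := by rw [hI]; exact I_lt_top.ne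
  have hIle : I ≤ ENNReal.ofReal C₀ := by
    conv_lhs => rw [← ENNReal.ofReal_toReal hIne]
    exact ENNReal.ofReal_le_ofReal (by simp [hC₀])
  refine ⟨16 * C₀, by positivity, fun R hR x₀ y₀ => ?_⟩
  have hθ := theta_nonneg R hR x₀ y₀
  have key : ∀ a : E2, ∫⁻ x : E2, ENNReal.ofReal (thetaR R a x)
      ≤ ENNReal.ofReal R⁻¹ * ENNReal.ofReal C₀ := fun a => by
    rw [key_integral hR a]
    exact mul_le_mul_right hIle _
  calc ∫⁻ x : E2, ENNReal.ofReal (thetaR R x₀ x * thetaR R y₀ x)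
      ≤ ∫⁻ x : E2, ENNReal.ofReal (8 * thetaR R x₀ y₀ * (thetaR R x₀ x + thetaR R y₀ x)) :=
        lintegral_mono fun x => ENNReal.ofReal_le_ofReal (pointwise_bound hR x₀ y₀ x)
    _ = ENNReal.ofReal (8 * thetaR R x₀ y₀) *
          ∫⁻ x : E2, ENNReal.ofReal (thetaR R x₀ x + thetaR R y₀ x) := by
        rw [← lintegral_const_mul' _ _ ENNReal.ofReal_ne_top]
        refine lintegral_congr fun x => ?_
        rw [← ENNReal.ofReal_mul (by positivity)]
    _ = ENNReal.ofReal (8 * thetaR R x₀ y₀) *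
          ((∫⁻ x : E2, ENNReal.ofReal (thetaR R x₀ x))
            + ∫⁻ x : E2, ENNReal.ofReal (thetaR R y₀ x)) := by
        congr 1
        rw [← lintegral_add_left ((theta_cont R hR x₀).measurable.ennreal_ofReal)
          (fun x => ENNReal.ofReal (thetaR R y₀ x))]
        refine lintegral_congr fun x => ?_
        rw [ENNReal.ofReal_add (theta_nonneg R hR x₀ x) (theta_nonneg R hR y₀ x)]
    _ ≤ ENNReal.ofReal (8 * thetaR R x₀ y₀) *
          (ENNReal.ofReal R⁻¹ * ENNReal.ofReal C₀ + ENNReal.ofReal R⁻¹ * ENNReal.ofReal C₀) :=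
        mul_le_mul_right (add_le_add (key x₀) (key y₀)) _
    _ = ENNReal.ofReal (16 * C₀ * R⁻¹ * thetaR R x₀ y₀) := by
        have h2 : (2 : ENNReal) = ENNReal.ofReal 2 := by norm_num
        rw [← two_mul, ← ENNReal.ofReal_mul (by positivity : (0:ℝ) ≤ R⁻¹), h2,
          ← ENNReal.ofReal_mul (by norm_num : (0:ℝ) ≤ 2),
          ← ENNReal.ofReal_mul (mul_nonneg (by norm_num) hθ)]
        congr 1
        ring
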